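/- Let V be an inner product space over ℂ, N ≥ 1, ψf : Fin N → V any family, ψi : Fin N → V an orthonormal family, O : V →ₗ[ℂ] V linear, and φc ∈ V with ‖φc‖ = 1, φc lying in the span of the ψi, ⟪ψf k, φc⟫ = 0 for every k, and ⟪φc, O φc⟫ = 0 (dipole selection rule). Let G be the (N+1)×(N+1) complex matrix with G k l = ⟪ψf k, ψi l⟫ for k, l < N, G k N = ⟪ψf k, O φc⟫ for k < N, G N l = ⟪φc, ψi l⟫ for l < N, and G N N = ⟪φc, O φc⟫. Then Σ_{n : Fin N} det (M n) = − det G; i.e. the one-body transition element between the core-excited and ground Slater determinants equals minus the overlap determinant of the (N+1)-electron determinants obtained by appending the core orbital φc to the final family and the polarized core orbital O φc to the initial family (selection-rule-aware formula, Eq. (23)). -/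

import Mathlib

open scoped InnerProductSpace

/-- Determinant is additive over replacing a column by a finite sum. -/
lemma det_updateColumn_finsum {n : Type*} [DecidableEq n] [Fintype n]
    {R : Type*} [CommRing R] (A : Matrix n n R) (j : n)
    {ι : Type*} (s : Finset ι) (f : ι → n → R) :
    (A.updateCol j (fun k => ∑ i ∈ s, f i k)).det
      = ∑ i ∈ s, (A.updateCol j (f i)).det := by
  classical
  induction s using Finset.induction_on with
  | empty =>
      simp only [Finset.sum_empty]
      apply Matrix.det_eq_zero_of_column_eq_zero j
      intro i
      simp [Matrix.updateCol_self]
  | insert a s' hk ih =>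
      simp only [Finset.sum_insert hk]
      rw [show (fun k => f a k + ∑ i ∈ s', f i k)
            = (fun k => f a k) + (fun k => ∑ i ∈ s', f i k) from rfl,
        Matrix.det_updateCol_add, ih]

/-- **Selection-rule-aware (SRB) formula, Eq. (23)**: the one-body transition
element `Σ_n det (M n)` between the core-excited and ground Slater determinants
equals minus the overlap determinant `det G` of the `(N+1)`-electron
determinants obtained by appending the core orbital `φc` to the final family
and the polarized core orbital `O φc` to the initial family. -/
theorem srb_transition_formula
    {V : Type*} [NormedAddCommGroup V] [InnerProductSpace ℂ V]
    {N : ℕ} (hN : 1 ≤ N)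
    (ψf ψi : Fin N → V)
    (hortho : Orthonormal ℂ ψi)
    (O : V →ₗ[ℂ] V)
    (φc : V) (hnorm : ‖φc‖ = 1)
    (hspan : φc ∈ Submodule.span ℂ (Set.range ψi))
    (hperp : ∀ k : Fin N, ⟪ψf k, φc⟫_ℂ = 0)
    (hsel : ⟪φc, O φc⟫_ℂ = 0)
    (M : Fin N → Matrix (Fin N) (Fin N) ℂ)
    (hM : ∀ n k l : Fin N,
      M n k l = if l = n then ⟪ψf k, O (ψi n)⟫_ℂ else ⟪ψf k, ψi l⟫_ℂ)
    (G : Matrix (Fin (N + 1)) (Fin (N + 1)) ℂ)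
    (hG₁ : ∀ k l : Fin N, G k.castSucc l.castSucc = ⟪ψf k, ψi l⟫_ℂ)
    (hG₂ : ∀ k : Fin N, G k.castSucc (Fin.last N) = ⟪ψf k, O φc⟫_ℂ)
    (hG₃ : ∀ l : Fin N, G (Fin.last N) l.castSucc = ⟪φc, ψi l⟫_ℂ)
    (hG₄ : G (Fin.last N) (Fin.last N) = ⟪φc, O φc⟫_ℂ) :
    ∑ n : Fin N, (M n).det = - G.det := by
  classical
  obtain ⟨d, hd⟩ := (Submodule.mem_span_range_iff_exists_fun ℂ).mp hspan
  -- basic scalar expansions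
  have hexp : ∀ y : V, ⟪y, φc⟫_ℂ = ∑ l, d l * ⟪y, ψi l⟫_ℂ := by
    intro y; rw [← hd, inner_sum]; simp [inner_smul_right]
  have hexpO : ∀ y : V, ⟪y, O φc⟫_ℂ = ∑ l, d l * ⟪y, O (ψi l)⟫_ℂ := by
    intro y; rw [← hd, map_sum, inner_sum]
    simp [inner_smul_right, map_smul]
  have hA : ∀ k : Fin N, ∑ l, d l * ⟪ψf k, ψi l⟫_ℂ = 0 := fun k =>
    (hexp (ψf k)).symm.trans (hperp k)
  have hone : ∑ l, d l * ⟪φc, ψi l⟫_ℂ = 1 := by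
    rw [← hexp φc, inner_self_eq_norm_sq_to_K, hnorm]; norm_num
  have hg : ∑ l, d l * ⟪φc, O (ψi l)⟫_ℂ = 0 := (hexpO φc).symm.trans hsel
  -- the candidate columns
  set v : Fin N → Fin (N + 1) → ℂ :=
    fun m => Fin.snoc (fun k : Fin N => ⟪ψf k, O (ψi m)⟫_ℂ) ⟪φc, O (ψi m)⟫_ℂ with hv
  set D : Fin N → Matrix (Fin (N + 1)) (Fin (N + 1)) ℂ :=
    fun m => G.updateCol (Fin.last N) (v m) with hD
  -- Step A: the last column of G is a linear combination of the `v m`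
  have hGdecomp : G = G.updateCol (Fin.last N) (fun k => ∑ m, d m * v m k) := by
    ext k j
    by_cases hj : j = Fin.last N
    · subst hj
      rw [Matrix.updateCol_self]
      induction k using Fin.lastCases with
      | last =>
          rw [hG₄, hsel]
          simp only [hv, Fin.snoc_last]
          exact hg.symm
      | cast k =>
          rw [hG₂ k, hexpO (ψf k)]
          simp only [hv, Fin.snoc_castSucc]
    · rw [Matrix.updateCol_ne hj]
  -- Step B: multilinearity in the last column
  have hstepB : G.det = ∑ m, d m * (D m).det := by
    conv_lhs => rw [hGdecomp]
    rw [det_updateColumn_finsum G (Fin.last N) Finset.univ (fun m k => d m * v m k)]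
    refine Finset.sum_congr rfl fun m _ => ?_
    show (G.updateCol (Fin.last N) (d m • v m)).det = d m * (D m).det
    rw [Matrix.det_updateCol_smul]
  -- Step C: for each m, `d m * det (D m)` is the det of `D m` with column m
  -- replaced by the last standard basis vector.
  set E : Fin N → Matrix (Fin (N + 1)) (Fin (N + 1)) ℂ :=
    fun m => (D m).updateCol m.castSucc (Pi.single (Fin.last N) 1) with hE
  have hstepC : ∀ m : Fin N, (E m).det = d m * (D m).det := by
    intro m
    set c : Fin (N + 1) → ℂ := Fin.snoc d 0 with hc
    have hcol : (fun k => ∑ i, c i • (D m) k i) = Pi.single (Fin.last N) 1 := by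
      funext k
      rw [Fin.sum_univ_castSucc]
      simp only [hc, Fin.snoc_castSucc, Fin.snoc_last, zero_smul, add_zero]
      have hDG : ∀ l : Fin N, (D m) k l.castSucc = G k l.castSucc := fun l =>
        Matrix.updateCol_ne (Fin.castSucc_lt_last l).ne
      simp only [hDG, smul_eq_mul]
      induction k using Fin.lastCases with
      | last =>
          simp only [hG₃, hone]
          simp [Pi.single_apply]
      | cast k =>
          simp only [hG₁, hA k]
          rw [Pi.single_apply, if_neg (Fin.castSucc_lt_last k).ne]
    have h := Matrix.det_updateCol_sum (D m) m.castSucc c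
    rw [hcol] at h
    simp only [hE]
    simp only [h, hc, Fin.snoc_castSucc, smul_eq_mul]
  -- Step D: `det (E m) = - det (M m)`
  have hstepD : ∀ m : Fin N, (E m).det = -(M m).det := by
    intro m
    have hmne : m.castSucc ≠ Fin.last N := (Fin.castSucc_lt_last m).ne
    set σ : Equiv.Perm (Fin (N + 1)) := Equiv.swap m.castSucc (Fin.last N) with hσ
    have hperm := Matrix.det_permute' σ (E m)
    have hsign : Equiv.Perm.sign σ = -1 := Equiv.Perm.sign_swap hmne
    -- identify the permuted matrix with a block matrix
    set r : Matrix (Fin 1) (Fin N) ℂ :=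
      fun _ l => (E m) (Fin.last N) (σ l.castSucc) with hr
    have hblock : ((E m).submatrix id σ).submatrix
        (finSumFinEquiv : Fin N ⊕ Fin 1 ≃ Fin (N + 1)) finSumFinEquiv
        = Matrix.fromBlocks (M m) 0 r 1 := by
      ext i j
      have hinl : ∀ k : Fin N,
          (finSumFinEquiv : Fin N ⊕ Fin 1 ≃ Fin (N + 1)) (Sum.inl k) = k.castSucc :=
        fun k => rfl
      have hinr : ∀ j : Fin 1,
          (finSumFinEquiv : Fin N ⊕ Fin 1 ≃ Fin (N + 1)) (Sum.inr j) = Fin.last N := by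
        intro j
        have : j = 0 := Subsingleton.elim _ _
        subst this
        rfl
      cases i with
      | inl k =>
          cases j with
          | inl l =>
              simp only [Matrix.submatrix_apply, hinl, id_eq, Matrix.fromBlocks_apply₁₁]
              by_cases hlm : l = m
              · subst hlm
                rw [hσ, Equiv.swap_apply_left]
                simp only [hE, hD, hv]
                rw [Matrix.updateCol_ne hmne.symm, Matrix.updateCol_self,
                  Fin.snoc_castSucc, hM l k l, if_pos rfl]
              · have h1 : l.castSucc ≠ m.castSucc := fun h => hlm (Fin.castSucc_inj.mp h)
                have h2 : l.castSucc ≠ Fin.last N := (Fin.castSucc_lt_last l).ne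
                rw [hσ, Equiv.swap_apply_of_ne_of_ne h1 h2]
                simp only [hE, hD]
                rw [Matrix.updateCol_ne h1, Matrix.updateCol_ne h2,
                  hG₁, hM m k l, if_neg hlm]
          | inr j =>
              simp only [Matrix.submatrix_apply, hinl, hinr, id_eq,
                Matrix.fromBlocks_apply₁₂, Matrix.zero_apply]
              rw [hσ, Equiv.swap_apply_right]
              simp only [hE]
              rw [Matrix.updateCol_self, Pi.single_apply,
                if_neg (Fin.castSucc_lt_last k).ne]
      | inr i =>
          cases j with
          | inl l =>
              simp only [Matrix.submatrix_apply, hinl, hinr, id_eq,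
                Matrix.fromBlocks_apply₂₁, hr]
              rfl
          | inr j =>
              simp only [Matrix.submatrix_apply, hinr, id_eq,
                Matrix.fromBlocks_apply₂₂]
              rw [hσ, Equiv.swap_apply_right]
              simp only [hE]
              rw [Matrix.updateCol_self, Pi.single_apply, if_pos rfl]
              have : i = j := Subsingleton.elim _ _
              subst this
              simp [Matrix.one_apply]
    have hdet1 : ((E m).submatrix id σ).det = (M m).det := by
      rw [← Matrix.det_submatrix_equiv_self
        (finSumFinEquiv : Fin N ⊕ Fin 1 ≃ Fin (N + 1)) ((E m).submatrix id σ),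
        hblock, Matrix.det_fromBlocks_zero₁₂]
      simp
    rw [hdet1, hsign] at hperm
    simp only [Units.val_neg, Units.val_one, Int.cast_neg, Int.cast_one, neg_mul,
      one_mul] at hperm
    rw [hperm]
    ring
  -- combine
  rw [hstepB, ← Finset.sum_congr rfl fun m _ => hstepC m,
    Finset.sum_congr rfl fun m _ => hstepD m]
  simp
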